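/- Let M = V_{0,0,9} be a no-label Verma module with q = 0 and c = 9, and set Ψ₁ = L_{−1}Q_0G_0v and Ψ₂ = H_{−1}Q_0G_0v + Q_{−1}G_0v − 2Q_0G_{−1}v. Then Ψ₁ and Ψ₂ are linearly independent, each has level 1 and charge 0, each is annihilated by the positive operators, and Q_0Ψ₁ = Q_0Ψ₂ = 0; hence Ψ₁ and Ψ₂ span a two-dimensional space of Q_0-closed singular vectors at level 1 and charge 0 in V_{0,0,9}. -/

import Mathlib

universe u

/-- A representation of the topological N=2 superconformal algebra with
central charge `c` on the complex vector space `M`. -/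
structure TopN2 (c : ℂ) (M : Type u) [AddCommGroup M] [Module ℂ M] where
  L : ℤ → Module.End ℂ M
  H : ℤ → Module.End ℂ M
  G : ℤ → Module.End ℂ M
  Q : ℤ → Module.End ℂ M
  hLL : ∀ m n : ℤ, L m * L n - L n * L m = ((m : ℂ) - (n : ℂ)) • L (m + n)
  hHH : ∀ m n : ℤ, H m * H n - H n * H m =
    (if m + n = 0 then c / 3 * (m : ℂ) else 0) • (1 : Module.End ℂ M)
  hLG : ∀ m n : ℤ, L m * G n - G n * L m = ((m : ℂ) - (n : ℂ)) • G (m + n)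
  hHG : ∀ m n : ℤ, H m * G n - G n * H m = G (m + n)
  hLQ : ∀ m n : ℤ, L m * Q n - Q n * L m = (-(n : ℂ)) • Q (m + n)
  hHQ : ∀ m n : ℤ, H m * Q n - Q n * H m = -(Q (m + n))
  hLH : ∀ m n : ℤ, L m * H n - H n * L m = (-(n : ℂ)) • H (m + n) +
    (if m + n = 0 then c / 6 * ((m : ℂ) ^ 2 + (m : ℂ)) else 0) • (1 : Module.End ℂ M)
  hGQ : ∀ m n : ℤ, G m * Q n + Q n * G m = (2 : ℂ) • L (m + n) + (-2 * (n : ℂ)) • H (m + n) +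
    (if m + n = 0 then c / 3 * ((m : ℂ) ^ 2 + (m : ℂ)) else 0) • (1 : Module.End ℂ M)
  hGG : ∀ m n : ℤ, G m * G n + G n * G m = 0
  hQQ : ∀ m n : ℤ, Q m * Q n + Q n * Q m = 0

/-- `Ψ` is annihilated by the positive operators. -/
def TopN2.AnnPos {c : ℂ} {M : Type u} [AddCommGroup M] [Module ℂ M]
    (A : TopN2 c M) (Ψ : M) : Prop :=
  ∀ k : ℤ, 1 ≤ k → A.L k Ψ = 0 ∧ A.H k Ψ = 0 ∧ A.G k Ψ = 0 ∧ A.Q k Ψ = 0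

/-- Apply the operators `F (-a_j)` for the entries `a_j` of the list (read left
to right) to `w`. -/
def listApplyN2 {M : Type u} [AddCommGroup M] [Module ℂ M]
    (F : ℤ → Module.End ℂ M) (l : List ℕ) (w : M) : M :=
  l.foldr (fun a x => F (-(a : ℤ)) x) w

/-- Apply `f` to `w` if `r = true`, corresponding to a factor `f^r`, `r ∈ {0,1}`. -/
def condApply {M : Type u} [AddCommGroup M] [Module ℂ M]
    (f : Module.End ℂ M) (r : Bool) (w : M) : M :=
  if r then f w else w

/-- Index of the standard basis of a no-label Verma module of the topological
N=2 algebra. -/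
structure NLIndex : Type where
  ls : List ℕ
  hs : List ℕ
  gs : List ℕ
  ps : List ℕ
  k : ℕ
  r1 : Bool
  r2 : Bool
  r3 : Bool
  r4 : Bool
  hls : ls.Pairwise (· ≥ ·)
  hls2 : ∀ x ∈ ls, 2 ≤ x
  hhs : hs.Pairwise (· ≥ ·)
  hhs2 : ∀ x ∈ hs, 1 ≤ x
  hgs : gs.Pairwise (· > ·)
  hgs2 : ∀ x ∈ gs, 2 ≤ x
  hps : ps.Pairwise (· > ·)
  hps2 : ∀ x ∈ ps, 2 ≤ x

/-- The basis vector
`L_{-l_a}···L_{-l_1} H_{-h_b}···H_{-h_1} G_{-g_d}···G_{-g_1} Q_{-p_e}···Q_{-p_1}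
L_{-1}^k G_{-1}^{r_1} Q_{-1}^{r_2} G_0^{r_4} Q_0^{r_3} v` of a no-label Verma
module. -/
def NLIndex.vec {c : ℂ} {M : Type u} [AddCommGroup M] [Module ℂ M]
    (A : TopN2 c M) (v : M) (i : NLIndex) : M :=
  listApplyN2 A.L i.ls <| listApplyN2 A.H i.hs <| listApplyN2 A.G i.gs <|
    listApplyN2 A.Q i.ps <| ((A.L (-1)) ^ i.k) <|
      condApply (A.G (-1)) i.r1 <| condApply (A.Q (-1)) i.r2 <|
        condApply (A.G 0) i.r4 <| condApply (A.Q 0) i.r3 v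

/-- A no-label Verma module `V_{0,q,c}` of the topological N=2 superconformal
algebra. -/
structure NLVerma (c q : ℂ) (M : Type u) [AddCommGroup M] [Module ℂ M]
    extends TopN2 c M where
  v : M
  hv0 : L 0 v = 0
  hvH : H 0 v = q • v
  hvann : ∀ k : ℤ, 1 ≤ k → L k v = 0 ∧ H k v = 0 ∧ G k v = 0 ∧ Q k v = 0
  b : Module.Basis NLIndex ℂ M
  hb : ∀ i : NLIndex, b i = i.vec toTopN2 v

section NLAux

variable {M : Type u} [AddCommGroup M] [Module ℂ M] (V : NLVerma 9 0 M)

/- Applied (anti)commutation relations. -/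

private lemma apLL (m n : ℤ) (x : M) :
    V.L m (V.L n x) = V.L n (V.L m x) + ((m : ℂ) - n) • V.L (m + n) x := by
  have h := LinearMap.congr_fun (V.hLL m n) x
  simp only [LinearMap.sub_apply, Module.End.mul_apply, LinearMap.smul_apply] at h
  rw [sub_eq_iff_eq_add] at h
  rw [h]; exact add_comm _ _

private lemma apLG (m n : ℤ) (x : M) :
    V.L m (V.G n x) = V.G n (V.L m x) + ((m : ℂ) - n) • V.G (m + n) x := by
  have h := LinearMap.congr_fun (V.hLG m n) x
  simp only [LinearMap.sub_apply, Module.End.mul_apply, LinearMap.smul_apply] at h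
  rw [sub_eq_iff_eq_add] at h
  rw [h]; exact add_comm _ _

private lemma apGL (m n : ℤ) (x : M) :
    V.G n (V.L m x) = V.L m (V.G n x) - ((m : ℂ) - n) • V.G (m + n) x := by
  rw [apLG]; abel

private lemma apHG (m n : ℤ) (x : M) :
    V.H m (V.G n x) = V.G n (V.H m x) + V.G (m + n) x := by
  have h := LinearMap.congr_fun (V.hHG m n) x
  simp only [LinearMap.sub_apply, Module.End.mul_apply] at h
  rw [sub_eq_iff_eq_add] at h
  rw [h]; exact add_comm _ _

private lemma apGH (m n : ℤ) (x : M) :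
    V.G n (V.H m x) = V.H m (V.G n x) - V.G (m + n) x := by
  rw [apHG]; abel

private lemma apLQ (m n : ℤ) (x : M) :
    V.L m (V.Q n x) = V.Q n (V.L m x) + (-(n : ℂ)) • V.Q (m + n) x := by
  have h := LinearMap.congr_fun (V.hLQ m n) x
  simp only [LinearMap.sub_apply, Module.End.mul_apply, LinearMap.smul_apply] at h
  rw [sub_eq_iff_eq_add] at h
  rw [h]; exact add_comm _ _

private lemma apQL (m n : ℤ) (x : M) :
    V.Q n (V.L m x) = V.L m (V.Q n x) - (-(n : ℂ)) • V.Q (m + n) x := by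
  rw [apLQ]; abel

private lemma apHQ (m n : ℤ) (x : M) :
    V.H m (V.Q n x) = V.Q n (V.H m x) - V.Q (m + n) x := by
  have h := LinearMap.congr_fun (V.hHQ m n) x
  simp only [LinearMap.sub_apply, Module.End.mul_apply, LinearMap.neg_apply] at h
  rw [sub_eq_iff_eq_add] at h
  rw [h]; abel

private lemma apQH (m n : ℤ) (x : M) :
    V.Q n (V.H m x) = V.H m (V.Q n x) + V.Q (m + n) x := by
  rw [apHQ]; abel

private lemma apLH (m n : ℤ) (x : M) :
    V.L m (V.H n x) = V.H n (V.L m x) + (-(n : ℂ)) • V.H (m + n) x +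
      (if m + n = 0 then (9 : ℂ) / 6 * ((m : ℂ) ^ 2 + (m : ℂ)) else 0) • x := by
  have h := LinearMap.congr_fun (V.hLH m n) x
  simp only [LinearMap.sub_apply, Module.End.mul_apply, LinearMap.add_apply,
    LinearMap.smul_apply, Module.End.one_apply] at h
  rw [sub_eq_iff_eq_add] at h
  rw [h]; abel

private lemma apHL (m n : ℤ) (x : M) :
    V.H n (V.L m x) = V.L m (V.H n x) - (-(n : ℂ)) • V.H (m + n) x -
      (if m + n = 0 then (9 : ℂ) / 6 * ((m : ℂ) ^ 2 + (m : ℂ)) else 0) • x := by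
  rw [apLH]; abel

private lemma apHH (m n : ℤ) (x : M) :
    V.H m (V.H n x) = V.H n (V.H m x) +
      (if m + n = 0 then (9 : ℂ) / 3 * (m : ℂ) else 0) • x := by
  have h := LinearMap.congr_fun (V.hHH m n) x
  simp only [LinearMap.sub_apply, Module.End.mul_apply, LinearMap.smul_apply,
    Module.End.one_apply] at h
  rw [sub_eq_iff_eq_add] at h
  rw [h]; exact add_comm _ _

private lemma apGQ (m n : ℤ) (x : M) :
    V.G m (V.Q n x) = (2 : ℂ) • V.L (m + n) x + (-2 * (n : ℂ)) • V.H (m + n) x +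
      (if m + n = 0 then (9 : ℂ) / 3 * ((m : ℂ) ^ 2 + (m : ℂ)) else 0) • x -
      V.Q n (V.G m x) := by
  have h := LinearMap.congr_fun (V.hGQ m n) x
  simp only [LinearMap.add_apply, Module.End.mul_apply, LinearMap.smul_apply,
    Module.End.one_apply] at h
  exact eq_sub_of_add_eq h

private lemma apQG (m n : ℤ) (x : M) :
    V.Q n (V.G m x) = (2 : ℂ) • V.L (m + n) x + (-2 * (n : ℂ)) • V.H (m + n) x +
      (if m + n = 0 then (9 : ℂ) / 3 * ((m : ℂ) ^ 2 + (m : ℂ)) else 0) • x -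
      V.G m (V.Q n x) := by
  rw [apGQ]; abel

private lemma apGG (m n : ℤ) (x : M) :
    V.G m (V.G n x) = -(V.G n (V.G m x)) := by
  have h := LinearMap.congr_fun (V.hGG m n) x
  simp only [LinearMap.add_apply, Module.End.mul_apply, LinearMap.zero_apply] at h
  exact eq_neg_of_add_eq_zero_left h

private lemma apQQ (m n : ℤ) (x : M) :
    V.Q m (V.Q n x) = -(V.Q n (V.Q m x)) := by
  have h := LinearMap.congr_fun (V.hQQ m n) x
  simp only [LinearMap.add_apply, Module.End.mul_apply, LinearMap.zero_apply] at h
  exact eq_neg_of_add_eq_zero_left h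

private lemma apGGself (m : ℤ) (x : M) : V.G m (V.G m x) = 0 := by
  have h := apGG V m m x
  rw [eq_neg_iff_add_eq_zero, ← two_smul ℂ] at h
  exact (smul_eq_zero.mp h).resolve_left (by norm_num)

private lemma apQQself (m : ℤ) (x : M) : V.Q m (V.Q m x) = 0 := by
  have h := apQQ V m m x
  rw [eq_neg_iff_add_eq_zero, ← two_smul ℂ] at h
  exact (smul_eq_zero.mp h).resolve_left (by norm_num)

/- Action on the highest-weight vector. -/

private lemma vL (k : ℤ) (hk : 0 ≤ k) : V.L k V.v = 0 := by
  rcases eq_or_lt_of_le hk with h | h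
  · rw [← h]; exact V.hv0
  · exact (V.hvann k (by omega)).1

private lemma vH (k : ℤ) (hk : 0 ≤ k) : V.H k V.v = 0 := by
  rcases eq_or_lt_of_le hk with h | h
  · rw [← h, V.hvH, zero_smul]
  · exact (V.hvann k (by omega)).2.1

private lemma vG (k : ℤ) (hk : 1 ≤ k) : V.G k V.v = 0 := (V.hvann k hk).2.2.1

private lemma vQ (k : ℤ) (hk : 1 ≤ k) : V.Q k V.v = 0 := (V.hvann k hk).2.2.2

/- Action on G₀ v and G₋₁ v. -/

private lemma lG0 (k : ℤ) (hk : 0 ≤ k) : V.L k (V.G 0 V.v) = 0 := by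
  rw [apLG V k 0, vL V k hk, map_zero, zero_add]
  rcases eq_or_lt_of_le hk with h | h
  · rw [← h]; simp
  · rw [vG V (k + 0) (by omega), smul_zero]

private lemma hG00 : V.H 0 (V.G 0 V.v) = V.G 0 V.v := by
  rw [apHG V 0 0, vH V 0 le_rfl, map_zero, zero_add]
  norm_num

private lemma hG0 (k : ℤ) (hk : 1 ≤ k) : V.H k (V.G 0 V.v) = 0 := by
  rw [apHG V k 0, vH V k (by omega), map_zero, zero_add, vG V (k + 0) (by omega)]

private lemma gG0 (k : ℤ) (hk : 0 ≤ k) : V.G k (V.G 0 V.v) = 0 := by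
  rcases eq_or_lt_of_le hk with h | h
  · rw [← h]; exact apGGself V 0 V.v
  · rw [apGG V k 0, vG V k (by omega), map_zero, neg_zero]

private lemma qG0 (k : ℤ) (hk : 1 ≤ k) : V.Q k (V.G 0 V.v) = 0 := by
  rw [apQG V 0 k, vQ V k hk, map_zero, vL V (0 + k) (by omega),
    vH V (0 + k) (by omega), if_neg (by omega)]
  simp

private lemma qGm1 (k : ℤ) (hk : 1 ≤ k) : V.Q k (V.G (-1) V.v) = 0 := by
  rw [apQG V (-1) k, vQ V k hk, map_zero, vL V (-1 + k) (by omega),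
    vH V (-1 + k) (by omega)]
  have hc : ((-1 : ℤ) : ℂ) ^ 2 + ((-1 : ℤ) : ℂ) = 0 := by norm_num
  simp [hc]

private lemma lGm1 (k : ℤ) (hk : 0 ≤ k) :
    V.L k (V.G (-1) V.v) = ((k : ℂ) + 1) • V.G (k + -1) V.v := by
  rw [apLG V k (-1), vL V k hk, map_zero, zero_add]
  norm_num

private lemma hGm1 (k : ℤ) (hk : 1 ≤ k) :
    V.H k (V.G (-1) V.v) = V.G (k + -1) V.v := by
  rw [apHG V k (-1), vH V k (by omega), map_zero, zero_add]

private lemma gGm1 (k : ℤ) (hk : 1 ≤ k) : V.G k (V.G (-1) V.v) = 0 := by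
  rw [apGG V k (-1), vG V k hk, map_zero, neg_zero]

/- Action on X = Q₀G₀v. -/

private lemma lX (k : ℤ) (hk : 0 ≤ k) : V.L k (V.Q 0 (V.G 0 V.v)) = 0 := by
  rw [apLQ V k 0, lG0 V k hk, map_zero, zero_add]
  norm_num

private lemma hX (k : ℤ) (hk : 0 ≤ k) : V.H k (V.Q 0 (V.G 0 V.v)) = 0 := by
  rw [apHQ V k 0]
  rcases eq_or_lt_of_le hk with h | h
  · rw [← h, hG00]; norm_num
  · rw [hG0 V k (by omega), map_zero, zero_sub, qG0 V (k + 0) (by omega), neg_zero]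

private lemma gX (k : ℤ) (hk : 0 ≤ k) : V.G k (V.Q 0 (V.G 0 V.v)) = 0 := by
  rw [apGQ V k 0, gG0 V k hk, map_zero, lG0 V (k + 0) (by omega)]
  rcases eq_or_lt_of_le hk with h | h
  · rw [← h]; norm_num
  · rw [if_neg (by omega)]; simp

private lemma qX (k : ℤ) (hk : 0 ≤ k) : V.Q k (V.Q 0 (V.G 0 V.v)) = 0 := by
  rcases eq_or_lt_of_le hk with h | h
  · rw [← h]; exact apQQself V 0 _
  · rw [apQQ V k 0, qG0 V k (by omega), map_zero, neg_zero]

end NLAux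

section NLAux2

variable {M : Type u} [AddCommGroup M] [Module ℂ M] (V : NLVerma 9 0 M)

/- Properties of Ψ₁ = L₋₁X, X = Q₀G₀v. -/

private lemma L0Psi1 : V.L 0 (V.L (-1) (V.Q 0 (V.G 0 V.v))) =
    (1 : ℂ) • V.L (-1) (V.Q 0 (V.G 0 V.v)) := by
  rw [apLL V 0 (-1), lX V 0 le_rfl, map_zero, zero_add]
  norm_num

private lemma H0Psi1 : V.H 0 (V.L (-1) (V.Q 0 (V.G 0 V.v))) =
    (0 : ℂ) • V.L (-1) (V.Q 0 (V.G 0 V.v)) := by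
  rw [apHL V (-1) 0, hX V 0 le_rfl, map_zero]
  norm_num

private lemma Q0Psi1 : V.Q 0 (V.L (-1) (V.Q 0 (V.G 0 V.v))) = 0 := by
  rw [apQL V (-1) 0, qX V 0 le_rfl, map_zero]
  norm_num

private lemma annPsi1 : V.toTopN2.AnnPos (V.L (-1) (V.Q 0 (V.G 0 V.v))) := by
  intro k hk
  refine ⟨?_, ?_, ?_, ?_⟩
  · rw [apLL V k (-1), lX V k (by omega), lX V (k + -1) (by omega), map_zero]
    simp
  · rw [apHL V (-1) k, hX V k (by omega), hX V (-1 + k) (by omega), map_zero]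
    have hc : ((-1 : ℤ) : ℂ) ^ 2 + ((-1 : ℤ) : ℂ) = 0 := by norm_num
    simp [hc]
  · rw [apGL V (-1) k, gX V k (by omega), gX V (-1 + k) (by omega), map_zero]
    simp
  · rw [apQL V (-1) k, qX V k (by omega), qX V (-1 + k) (by omega), map_zero]
    simp

/- Properties of Ψ₂ = H₋₁X + Q₋₁G₀v − 2·Q₀G₋₁v. -/

private lemma L0Psi2 : V.L 0 (V.H (-1) (V.Q 0 (V.G 0 V.v)) + V.Q (-1) (V.G 0 V.v) -
      (2 : ℂ) • V.Q 0 (V.G (-1) V.v)) =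
    (1 : ℂ) • (V.H (-1) (V.Q 0 (V.G 0 V.v)) + V.Q (-1) (V.G 0 V.v) -
      (2 : ℂ) • V.Q 0 (V.G (-1) V.v)) := by
  have e1 : V.L 0 (V.H (-1) (V.Q 0 (V.G 0 V.v))) = V.H (-1) (V.Q 0 (V.G 0 V.v)) := by
    rw [apLH V 0 (-1), lX V 0 le_rfl, map_zero, zero_add,
      show (0:ℤ) + -1 = -1 from by omega]
    norm_num
  have e2 : V.L 0 (V.Q (-1) (V.G 0 V.v)) = V.Q (-1) (V.G 0 V.v) := by
    rw [apLQ V 0 (-1), lG0 V 0 le_rfl, map_zero, zero_add]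
    norm_num
  have e3 : V.L 0 (V.Q 0 (V.G (-1) V.v)) = V.Q 0 (V.G (-1) V.v) := by
    rw [apLQ V 0 0, lGm1 V 0 le_rfl]
    norm_num
  rw [map_sub, map_add, map_smul, e1, e2, e3, one_smul]

private lemma H0Psi2 : V.H 0 (V.H (-1) (V.Q 0 (V.G 0 V.v)) + V.Q (-1) (V.G 0 V.v) -
      (2 : ℂ) • V.Q 0 (V.G (-1) V.v)) =
    (0 : ℂ) • (V.H (-1) (V.Q 0 (V.G 0 V.v)) + V.Q (-1) (V.G 0 V.v) -
      (2 : ℂ) • V.Q 0 (V.G (-1) V.v)) := by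
  have e1 : V.H 0 (V.H (-1) (V.Q 0 (V.G 0 V.v))) = 0 := by
    rw [apHH V 0 (-1), hX V 0 le_rfl, map_zero, zero_add, if_neg (by omega), zero_smul]
  have e2 : V.H 0 (V.Q (-1) (V.G 0 V.v)) = 0 := by
    rw [apHQ V 0 (-1), hG00]
    norm_num
  have e3 : V.H 0 (V.Q 0 (V.G (-1) V.v)) = 0 := by
    have h : V.H 0 (V.G (-1) V.v) = V.G (-1) V.v := by
      rw [apHG V 0 (-1), vH V 0 le_rfl, map_zero, zero_add]
      norm_num
    rw [apHQ V 0 0, h]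
    norm_num
  rw [map_sub, map_add, map_smul, e1, e2, e3, zero_smul]
  simp

private lemma Q0Psi2 : V.Q 0 (V.H (-1) (V.Q 0 (V.G 0 V.v)) + V.Q (-1) (V.G 0 V.v) -
      (2 : ℂ) • V.Q 0 (V.G (-1) V.v)) = 0 := by
  have e1 : V.Q 0 (V.H (-1) (V.Q 0 (V.G 0 V.v))) = V.Q (-1) (V.Q 0 (V.G 0 V.v)) := by
    rw [apQH V (-1) 0, qX V 0 le_rfl, map_zero, zero_add]
    norm_num
  have e2 : V.Q 0 (V.Q (-1) (V.G 0 V.v)) = -(V.Q (-1) (V.Q 0 (V.G 0 V.v))) := by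
    rw [apQQ V 0 (-1)]
  have e3 : V.Q 0 (V.Q 0 (V.G (-1) V.v)) = 0 := apQQself V 0 _
  rw [map_sub, map_add, map_smul, e1, e2, e3, smul_zero]
  abel

private lemma annPsi2 : V.toTopN2.AnnPos (V.H (-1) (V.Q 0 (V.G 0 V.v)) +
    V.Q (-1) (V.G 0 V.v) - (2 : ℂ) • V.Q 0 (V.G (-1) V.v)) := by
  intro k hk
  refine ⟨?_, ?_, ?_, ?_⟩
  · -- L k
    rcases eq_or_lt_of_le hk with h | h
    · subst h
      have e1 : V.L 1 (V.H (-1) (V.Q 0 (V.G 0 V.v))) = (3 : ℂ) • V.Q 0 (V.G 0 V.v) := by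
        rw [apLH V 1 (-1), lX V 1 (by omega), map_zero, zero_add,
          hX V (1 + -1) (by omega), smul_zero, zero_add]
        norm_num
      have e2 : V.L 1 (V.Q (-1) (V.G 0 V.v)) = V.Q 0 (V.G 0 V.v) := by
        rw [apLQ V 1 (-1), lG0 V 1 (by omega), map_zero, zero_add]
        norm_num
      have e3 : V.L 1 (V.Q 0 (V.G (-1) V.v)) = (2 : ℂ) • V.Q 0 (V.G 0 V.v) := by
        rw [apLQ V 1 0, lGm1 V 1 (by omega)]
        norm_num
      rw [map_sub, map_add, map_smul, e1, e2, e3]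
      module
    · have e1 : V.L k (V.H (-1) (V.Q 0 (V.G 0 V.v))) = 0 := by
        rw [apLH V k (-1), lX V k (by omega), map_zero, zero_add,
          hX V (k + -1) (by omega), smul_zero, zero_add, if_neg (by omega), zero_smul]
      have e2 : V.L k (V.Q (-1) (V.G 0 V.v)) = 0 := by
        rw [apLQ V k (-1), lG0 V k (by omega), map_zero, zero_add,
          qG0 V (k + -1) (by omega), smul_zero]
      have e3 : V.L k (V.Q 0 (V.G (-1) V.v)) = 0 := by
        rw [apLQ V k 0, lGm1 V k (by omega), vG V (k + -1) (by omega)]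
        simp
      rw [map_sub, map_add, map_smul, e1, e2, e3]
      simp
  · -- H k
    rcases eq_or_lt_of_le hk with h | h
    · subst h
      have e1 : V.H 1 (V.H (-1) (V.Q 0 (V.G 0 V.v))) = (3 : ℂ) • V.Q 0 (V.G 0 V.v) := by
        rw [apHH V 1 (-1), hX V 1 (by omega), map_zero, zero_add]
        norm_num
      have e2 : V.H 1 (V.Q (-1) (V.G 0 V.v)) = -(V.Q 0 (V.G 0 V.v)) := by
        rw [apHQ V 1 (-1), hG0 V 1 (by omega), map_zero, zero_sub]
        norm_num
      have e3 : V.H 1 (V.Q 0 (V.G (-1) V.v)) = V.Q 0 (V.G 0 V.v) := by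
        rw [apHQ V 1 0, hGm1 V 1 (by omega), qGm1 V (1 + 0) (by omega), sub_zero]
        norm_num
      rw [map_sub, map_add, map_smul, e1, e2, e3]
      module
    · have e1 : V.H k (V.H (-1) (V.Q 0 (V.G 0 V.v))) = 0 := by
        rw [apHH V k (-1), hX V k (by omega), map_zero, zero_add,
          if_neg (by omega), zero_smul]
      have e2 : V.H k (V.Q (-1) (V.G 0 V.v)) = 0 := by
        rw [apHQ V k (-1), hG0 V k (by omega), map_zero, zero_sub,
          qG0 V (k + -1) (by omega), neg_zero]
      have e3 : V.H k (V.Q 0 (V.G (-1) V.v)) = 0 := by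
        rw [apHQ V k 0, hGm1 V k (by omega), vG V (k + -1) (by omega), map_zero,
          zero_sub, qGm1 V (k + 0) (by omega), neg_zero]
      rw [map_sub, map_add, map_smul, e1, e2, e3]
      simp
  · -- G k
    have e1 : V.G k (V.H (-1) (V.Q 0 (V.G 0 V.v))) = 0 := by
      rw [apGH V (-1) k, gX V k (by omega), map_zero, zero_sub,
        gX V (-1 + k) (by omega), neg_zero]
    rcases eq_or_lt_of_le hk with h | h
    · subst h
      have e2 : V.G 1 (V.Q (-1) (V.G 0 V.v)) = (8 : ℂ) • V.G 0 V.v := by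
        rw [apGQ V 1 (-1), gG0 V 1 (by omega), map_zero, sub_zero,
          show (1:ℤ) + -1 = 0 from by omega, lG0 V 0 le_rfl, hG00, smul_zero, zero_add]
        norm_num
        module
      have e3 : V.G 1 (V.Q 0 (V.G (-1) V.v)) = (4 : ℂ) • V.G 0 V.v := by
        rw [apGQ V 1 0, gGm1 V 1 (by omega), map_zero, sub_zero,
          show (1:ℤ) + 0 = 1 from by omega, lGm1 V 1 (by omega),
          show (1:ℤ) + -1 = 0 from by omega, if_neg (by omega), zero_smul, add_zero]
        norm_num
        module
      rw [map_sub, map_add, map_smul, e1, e2, e3]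
      module
    · have e2 : V.G k (V.Q (-1) (V.G 0 V.v)) = 0 := by
        rw [apGQ V k (-1), gG0 V k (by omega), map_zero, sub_zero,
          lG0 V (k + -1) (by omega), hG0 V (k + -1) (by omega), if_neg (by omega)]
        simp
      have e3 : V.G k (V.Q 0 (V.G (-1) V.v)) = 0 := by
        rw [apGQ V k 0, gGm1 V k (by omega), map_zero, sub_zero,
          lGm1 V (k + 0) (by omega), vG V (k + 0 + -1) (by omega),
          if_neg (by omega)]
        simp
      rw [map_sub, map_add, map_smul, e1, e2, e3]
      simp
  · -- Q k
    have e1 : V.Q k (V.H (-1) (V.Q 0 (V.G 0 V.v))) = 0 := by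
      rw [apQH V (-1) k, qX V k (by omega), map_zero, zero_add,
        qX V (-1 + k) (by omega)]
    have e2 : V.Q k (V.Q (-1) (V.G 0 V.v)) = 0 := by
      rw [apQQ V k (-1), qG0 V k (by omega), map_zero, neg_zero]
    have e3 : V.Q k (V.Q 0 (V.G (-1) V.v)) = 0 := by
      rw [apQQ V k 0, qGm1 V k (by omega), map_zero, neg_zero]
    rw [map_sub, map_add, map_smul, e1, e2, e3]
    simp

end NLAux2

section NLAux3

private def i0 : NLIndex :=
  ⟨[], [], [], [], 1, false, false, true, true, by simp, by simp, by simp, by simp,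
    by simp, by simp, by simp, by simp⟩

private def i1 : NLIndex :=
  ⟨[], [1], [], [], 0, false, false, true, true, by simp, by simp, by simp, by simp,
    by simp, by simp, by simp, by simp⟩

private def i2 : NLIndex :=
  ⟨[], [], [], [], 0, false, true, false, true, by simp, by simp, by simp, by simp,
    by simp, by simp, by simp, by simp⟩

private def i3 : NLIndex :=
  ⟨[], [], [], [], 1, false, false, false, false, by simp, by simp, by simp, by simp,
    by simp, by simp, by simp, by simp⟩

private def i4 : NLIndex :=
  ⟨[], [], [], [], 0, true, false, true, false, by simp, by simp, by simp, by simp,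
    by simp, by simp, by simp, by simp⟩

variable {M : Type u} [AddCommGroup M] [Module ℂ M] (V : NLVerma 9 0 M)

private lemma hb0 : V.b i0 = V.L (-1) (V.G 0 (V.Q 0 V.v)) := by
  rw [V.hb]
  simp [NLIndex.vec, i0, listApplyN2, condApply]

private lemma hb1 : V.b i1 = V.H (-1) (V.G 0 (V.Q 0 V.v)) := by
  rw [V.hb]
  simp [NLIndex.vec, i1, listApplyN2, condApply]

private lemma hb2 : V.b i2 = V.Q (-1) (V.G 0 V.v) := by
  rw [V.hb]
  simp [NLIndex.vec, i2, listApplyN2, condApply]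

private lemma hb3 : V.b i3 = V.L (-1) V.v := by
  rw [V.hb]
  simp [NLIndex.vec, i3, listApplyN2, condApply]

private lemma hb4 : V.b i4 = V.G (-1) (V.Q 0 V.v) := by
  rw [V.hb]
  simp [NLIndex.vec, i4, listApplyN2, condApply]

/-- `Q₀G₀v = -G₀Q₀v`. -/
private lemma qgSwap : V.Q 0 (V.G 0 V.v) = -(V.G 0 (V.Q 0 V.v)) := by
  rw [apQG V 0 0, show (0:ℤ) + 0 = 0 from by omega, vL V 0 le_rfl]
  norm_num

private lemma relPsi1 : V.L (-1) (V.Q 0 (V.G 0 V.v)) = -(V.b i0) := by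
  rw [qgSwap, map_neg, hb0]

private lemma relT1 : V.H (-1) (V.Q 0 (V.G 0 V.v)) = -(V.b i1) := by
  rw [qgSwap, map_neg, hb1]

private lemma relT2 : V.Q (-1) (V.G 0 V.v) = V.b i2 := (hb2 V).symm

private lemma relT3 : V.Q 0 (V.G (-1) V.v) = (2 : ℂ) • V.b i3 - V.b i4 := by
  rw [apQG V (-1) 0, show (-1:ℤ) + 0 = -1 from by omega, ← hb3, ← hb4]
  norm_num

private lemma ne10 : i1 ≠ i0 := by
  intro h; simpa [i0, i1] using congrArg NLIndex.hs h

private lemma ne20 : i2 ≠ i0 := by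
  intro h; simpa [i0, i2] using congrArg NLIndex.k h

private lemma ne30 : i3 ≠ i0 := by
  intro h; simpa [i0, i3] using congrArg NLIndex.r3 h

private lemma ne40 : i4 ≠ i0 := by
  intro h; simpa [i0, i4] using congrArg NLIndex.k h

private lemma ne01 : i0 ≠ i1 := fun h => ne10 h.symm

private lemma ne21 : i2 ≠ i1 := by
  intro h; simpa [i1, i2] using congrArg NLIndex.hs h

private lemma ne31 : i3 ≠ i1 := by
  intro h; simpa [i1, i3] using congrArg NLIndex.hs h

private lemma ne41 : i4 ≠ i1 := by
  intro h; simpa [i1, i4] using congrArg NLIndex.hs h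

private lemma liPsi : LinearIndependent ℂ
    ![V.L (-1) (V.Q 0 (V.G 0 V.v)),
      V.H (-1) (V.Q 0 (V.G 0 V.v)) + V.Q (-1) (V.G 0 V.v) -
        (2 : ℂ) • V.Q 0 (V.G (-1) V.v)] := by
  classical
  rw [LinearIndependent.pair_iff]
  intro s t hst
  rw [relPsi1, relT1, relT2, relT3] at hst
  have h0 := congrArg (V.b.coord i0) hst
  have h1 := congrArg (V.b.coord i1) hst
  simp only [map_add, map_sub, map_smul, map_neg, map_zero, Module.Basis.coord_apply,
    Module.Basis.repr_self_apply, if_pos rfl, if_neg ne10, if_neg ne20, if_neg ne30,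
    if_neg ne40, if_neg ne01, if_neg ne21, if_neg ne31, if_neg ne41,
    smul_eq_mul] at h0 h1
  norm_num at h0 h1
  exact ⟨h0, h1⟩

end NLAux3

private lemma rank_pair {M : Type u} [AddCommGroup M] [Module ℂ M] {x y : M}
    (h : LinearIndependent ℂ ![x, y]) :
    Module.rank ℂ ↥(Submodule.span ℂ {x, y}) = 2 := by
  have hxy : x ≠ y := by
    intro e
    have := (LinearIndependent.pair_iff.mp h) 1 (-1) (by rw [e]; module)
    simp at this
  have h2 : ({x, y} : Set M) = Set.range ![x, y] := by
    ext z; simp [Fin.exists_fin_two, or_comm]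
  rw [h2, rank_span h, ← h2]
  rw [show ({x, y} : Set M) = insert x {y} from rfl,
    Cardinal.mk_insert (by simpa using hxy), Cardinal.mk_singleton]
  norm_num


/-- in the no-label Verma module `V_{0,0,9}` the vectors
`Ψ₁ = L_{-1}Q₀G₀v` and `Ψ₂ = H_{-1}Q₀G₀v + Q_{-1}G₀v - 2Q₀G_{-1}v` span a
two-dimensional space of `Q₀`-closed singular vectors at level 1 and
charge 0. -/
theorem nlVerma_level_one_two_dimensional {M : Type u}
    [AddCommGroup M] [Module ℂ M] (V : NLVerma 9 0 M) :
    LinearIndependent ℂ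
      ![V.L (-1) (V.Q 0 (V.G 0 V.v)),
        V.H (-1) (V.Q 0 (V.G 0 V.v)) + V.Q (-1) (V.G 0 V.v) -
          (2 : ℂ) • V.Q 0 (V.G (-1) V.v)] ∧
    V.L 0 (V.L (-1) (V.Q 0 (V.G 0 V.v))) = (1 : ℂ) • V.L (-1) (V.Q 0 (V.G 0 V.v)) ∧
    V.H 0 (V.L (-1) (V.Q 0 (V.G 0 V.v))) = (0 : ℂ) • V.L (-1) (V.Q 0 (V.G 0 V.v)) ∧
    V.toTopN2.AnnPos (V.L (-1) (V.Q 0 (V.G 0 V.v))) ∧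
    V.Q 0 (V.L (-1) (V.Q 0 (V.G 0 V.v))) = 0 ∧
    V.L 0 (V.H (-1) (V.Q 0 (V.G 0 V.v)) + V.Q (-1) (V.G 0 V.v) -
        (2 : ℂ) • V.Q 0 (V.G (-1) V.v)) =
      (1 : ℂ) • (V.H (-1) (V.Q 0 (V.G 0 V.v)) + V.Q (-1) (V.G 0 V.v) -
        (2 : ℂ) • V.Q 0 (V.G (-1) V.v)) ∧
    V.H 0 (V.H (-1) (V.Q 0 (V.G 0 V.v)) + V.Q (-1) (V.G 0 V.v) -
        (2 : ℂ) • V.Q 0 (V.G (-1) V.v)) =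
      (0 : ℂ) • (V.H (-1) (V.Q 0 (V.G 0 V.v)) + V.Q (-1) (V.G 0 V.v) -
        (2 : ℂ) • V.Q 0 (V.G (-1) V.v)) ∧
    V.toTopN2.AnnPos (V.H (-1) (V.Q 0 (V.G 0 V.v)) + V.Q (-1) (V.G 0 V.v) -
        (2 : ℂ) • V.Q 0 (V.G (-1) V.v)) ∧
    V.Q 0 (V.H (-1) (V.Q 0 (V.G 0 V.v)) + V.Q (-1) (V.G 0 V.v) -
        (2 : ℂ) • V.Q 0 (V.G (-1) V.v)) = 0 ∧
    Module.rank ℂ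
      ↥(Submodule.span ℂ
        {V.L (-1) (V.Q 0 (V.G 0 V.v)),
         V.H (-1) (V.Q 0 (V.G 0 V.v)) + V.Q (-1) (V.G 0 V.v) -
           (2 : ℂ) • V.Q 0 (V.G (-1) V.v)}) = 2 := by
  refine ⟨liPsi V, L0Psi1 V, H0Psi1 V, annPsi1 V, Q0Psi1 V, L0Psi2 V, H0Psi2 V,
    annPsi2 V, Q0Psi2 V, ?_⟩
  exact rank_pair (liPsi V)
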